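/- Let X_1,…,X_n be ℝ^p-valued random vectors with means μ_i, and suppose Cov(X_i, X_j) = C(i−j) depends only on i−j (with C(−h) = C(h)ᵀ). Then for i ∈ {1,…,M+1}, E[V_i] = E[n^{-1}Σ_{h=1}^{n−i+1}(X_h − X̄)ᵀ(X_{h+i−1} − X̄)] = Σ_{j=1}^{M+1} F_{n,M}(i,j)·tr(C(j−1)) + n^{-1}Σ_{h=1}^{n−i+1}(μ_h − μ̄)ᵀ(μ_{h+i−1} − μ̄) + R, where F_{n,M} is the matrix defined below and the remainder R involves only traces tr(C(h)) with h > M. In particular, when C(h) = 0 for all |h| > M, E[V] = F_{n,M}·(tr C(0),…, tr C(M))ᵀ + V_B exactly, where V_B(i) = n^{-1}Σ_{h=1}^{n−i+1}(μ_h − μ̄)ᵀ(μ_{h+i−1} − μ̄). -/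

import Mathlib

open MeasureTheory ProbabilityTheory Matrix

private lemma count_pairs (n d : ℕ) (hd : d + 1 ≤ n) :
    (∑ a ∈ Finset.Icc 1 n, ∑ b ∈ Finset.Icc 1 n,
      if ((a:ℤ)-(b:ℤ)).natAbs = d then (1:ℝ) else 0)
    = (2 - if d = 0 then (1:ℝ) else 0) * ((n:ℝ) - d) := by
  rcases Nat.eq_zero_or_pos d with rfl | hdpos
  · have h1 : ∀ a ∈ Finset.Icc 1 n,
        (∑ b ∈ Finset.Icc 1 n, if ((a:ℤ)-(b:ℤ)).natAbs = 0 then (1:ℝ) else 0) = 1 := by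
      intro a ha
      have : ∀ b : ℕ, (if ((a:ℤ)-(b:ℤ)).natAbs = 0 then (1:ℝ) else 0)
          = if b = a then (1:ℝ) else 0 := by
        intro b; exact if_congr (by omega) rfl rfl
      simp only [this]
      rw [Finset.sum_ite_eq' (Finset.Icc 1 n) a (fun _ => (1:ℝ)), if_pos ha]
    rw [Finset.sum_congr rfl h1]
    simp; norm_num
  · have key : ∀ a b : ℕ, (if ((a:ℤ)-(b:ℤ)).natAbs = d then (1:ℝ) else 0)
        = (if a = b + d then (1:ℝ) else 0) + (if b = a + d then (1:ℝ) else 0) := by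
      intro a b
      split_ifs <;> first | (exfalso; omega) | norm_num
    simp only [key, Finset.sum_add_distrib]
    have c1 : (∑ a ∈ Finset.Icc 1 n, ∑ b ∈ Finset.Icc 1 n,
        if a = b + d then (1:ℝ) else 0) = ((n - d : ℕ) : ℝ) := by
      rw [Finset.sum_comm]
      have h2 : ∀ b ∈ Finset.Icc 1 n,
          (∑ a ∈ Finset.Icc 1 n, if a = b + d then (1:ℝ) else 0)
          = if b ∈ Finset.Icc 1 (n - d) then (1:ℝ) else 0 := by
        intro b hb
        rw [Finset.sum_ite_eq' (Finset.Icc 1 n) (b + d) (fun _ => (1:ℝ))]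
        refine if_congr ?_ rfl rfl
        simp only [Finset.mem_Icc] at *
        omega
      rw [Finset.sum_congr rfl h2, Finset.sum_ite_mem,
        Finset.inter_eq_right.mpr (Finset.Icc_subset_Icc le_rfl (by omega))]
      simp
    have c2 : (∑ a ∈ Finset.Icc 1 n, ∑ b ∈ Finset.Icc 1 n,
        if b = a + d then (1:ℝ) else 0) = ((n - d : ℕ) : ℝ) := by
      have h2 : ∀ a ∈ Finset.Icc 1 n,
          (∑ b ∈ Finset.Icc 1 n, if b = a + d then (1:ℝ) else 0)
          = if a ∈ Finset.Icc 1 (n - d) then (1:ℝ) else 0 := by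
        intro a ha
        rw [Finset.sum_ite_eq' (Finset.Icc 1 n) (a + d) (fun _ => (1:ℝ))]
        refine if_congr ?_ rfl rfl
        simp only [Finset.mem_Icc] at *
        omega
      rw [Finset.sum_congr rfl h2, Finset.sum_ite_mem,
        Finset.inter_eq_right.mpr (Finset.Icc_subset_Icc le_rfl (by omega))]
      simp
    rw [c1, c2, if_neg (by omega : ¬ d = 0)]
    have : ((n - d : ℕ) : ℝ) = (n:ℝ) - d := by
      rw [Nat.cast_sub (by omega)]
    rw [this]; ring

private lemma pick_sum (M K : ℕ) (hK : M + 1 ≤ K) (c : ℤ → ℝ)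
    (hcs : ∀ z, c (-z) = c z) (hc0 : ∀ z, (M:ℤ) < |z| → c z = 0) (z : ℤ) :
    (∑ j ∈ Finset.Icc 1 K, (if z.natAbs + 1 = j then (1:ℝ) else 0) * c ((j:ℤ)-1)) = c z := by
  have habs : c ((z.natAbs : ℤ)) = c z := by
    rcases Int.natAbs_eq z with h | h
    · rw [← h]
    · rw [h, ← hcs]; simp
  simp only [ite_mul, one_mul, zero_mul]
  rw [Finset.sum_ite_eq (Finset.Icc 1 K) (z.natAbs + 1) (fun j => c ((j:ℤ)-1))]
  by_cases hmem : z.natAbs + 1 ∈ Finset.Icc 1 K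
  · rw [if_pos hmem]
    rw [← habs]
    congr 1
    push_cast
    ring
  · rw [if_neg hmem]
    symm
    apply hc0
    simp only [Finset.mem_Icc] at hmem
    rw [Int.abs_eq_natAbs]
    omega

private lemma comb (n M i : ℕ) (hn : 2 ≤ n) (hM : M < n) (hi1 : 1 ≤ i) (hi2 : i ≤ M + 1)
    (c : ℤ → ℝ) (hcs : ∀ z, c (-z) = c z) (hc0 : ∀ z, (M:ℤ) < |z| → c z = 0)
    (F : ℕ → ℕ → ℝ)
    (hF : ∀ i j, F i j =
        (1 - ((i : ℝ) - 1) / (n : ℝ)) * (if i = j then 1 else 0)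
        + (1 - ((i : ℝ) - 1) / (n : ℝ)) * (1 - ((j : ℝ) - 1) / (n : ℝ)) *
            ((2 - if j = 1 then (1 : ℝ) else 0) / (n : ℝ))
        - (1 / (n : ℝ) ^ 2) * ∑ a ∈ Finset.Icc 1 (n - i + 1), ∑ b ∈ Finset.Icc 1 n,
            ((if ((a : ℤ) - (b : ℤ)).natAbs + 1 = j then (1 : ℝ) else 0)
              + (if ((a : ℤ) + (i : ℤ) - 1 - (b : ℤ)).natAbs + 1 = j then (1 : ℝ) else 0))) :
    (n:ℝ)⁻¹ * ∑ h ∈ Finset.Icc 1 (n - i + 1),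
      (c (1 - (i:ℤ))
        - (n:ℝ)⁻¹ * ∑ r ∈ Finset.Icc 1 n, c ((h:ℤ) - r)
        - (n:ℝ)⁻¹ * ∑ r ∈ Finset.Icc 1 n, c ((r:ℤ) - ((h:ℤ) + i - 1))
        + (n:ℝ)⁻¹ * ((n:ℝ)⁻¹ * ∑ r ∈ Finset.Icc 1 n, ∑ s ∈ Finset.Icc 1 n, c ((r:ℤ) - s)))
    = ∑ j ∈ Finset.Icc 1 (M+1), F i j * c ((j:ℤ) - 1) := by
  have hn0 : (n:ℝ) ≠ 0 := Nat.cast_ne_zero.mpr (by omega)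
  have hin : i ≤ n := by omega
  have hcard : ((Finset.Icc 1 (n - i + 1)).card : ℝ) = (n:ℝ) - i + 1 := by
    rw [Nat.card_Icc]
    push_cast [Nat.cast_sub hin]
    ring
  -- RHS expansion
  have hrhs : ∑ j ∈ Finset.Icc 1 (M+1), F i j * c ((j:ℤ) - 1)
      = (∑ j ∈ Finset.Icc 1 (M+1),
          ((1 - ((i : ℝ) - 1) / (n : ℝ)) * (if i = j then 1 else 0)) * c ((j:ℤ)-1))
        + (∑ j ∈ Finset.Icc 1 (M+1),
          ((1 - ((i : ℝ) - 1) / (n : ℝ)) * (1 - ((j : ℝ) - 1) / (n : ℝ)) *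
            ((2 - if j = 1 then (1 : ℝ) else 0) / (n : ℝ))) * c ((j:ℤ)-1))
        - (∑ j ∈ Finset.Icc 1 (M+1),
          ((1 / (n : ℝ) ^ 2) * ∑ a ∈ Finset.Icc 1 (n - i + 1), ∑ b ∈ Finset.Icc 1 n,
            ((if ((a : ℤ) - (b : ℤ)).natAbs + 1 = j then (1 : ℝ) else 0)
              + (if ((a : ℤ) + (i : ℤ) - 1 - (b : ℤ)).natAbs + 1 = j then (1 : ℝ) else 0))) * c ((j:ℤ)-1)) := by
    rw [← Finset.sum_add_distrib, ← Finset.sum_sub_distrib]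
    refine Finset.sum_congr rfl fun j _ => ?_
    rw [hF]; ring
  rw [hrhs]; clear hrhs
  -- Term 1
  have hA : (n:ℝ)⁻¹ * ∑ _h ∈ Finset.Icc 1 (n - i + 1), c (1 - (i:ℤ))
      = ∑ j ∈ Finset.Icc 1 (M+1),
          ((1 - ((i : ℝ) - 1) / (n : ℝ)) * (if i = j then 1 else 0)) * c ((j:ℤ)-1) := by
    have : ∀ j : ℕ, ((1 - ((i : ℝ) - 1) / (n : ℝ)) * (if i = j then 1 else 0)) * c ((j:ℤ)-1)
        = if i = j then (1 - ((i : ℝ) - 1) / (n : ℝ)) * c ((j:ℤ)-1) else 0 := by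
      intro j; split_ifs <;> ring
    rw [Finset.sum_congr rfl fun j _ => this j,
      Finset.sum_ite_eq (Finset.Icc 1 (M+1)) i (fun j => (1 - ((i : ℝ) - 1) / (n : ℝ)) * c ((j:ℤ)-1)),
      if_pos (Finset.mem_Icc.mpr ⟨hi1, hi2⟩)]
    have h1i : (1 : ℤ) - i = -((i:ℤ) - 1) := by ring
    rw [Finset.sum_const, nsmul_eq_mul, hcard, h1i, hcs, ← mul_assoc]
    congr 1
    field_simp
    ring
  -- the double-sum identity
  have hS : (∑ r ∈ Finset.Icc 1 n, ∑ s ∈ Finset.Icc 1 n, c ((r:ℤ) - s))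
      = ∑ j ∈ Finset.Icc 1 (M+1),
          ((2 - if j = 1 then (1:ℝ) else 0) * ((n:ℝ) - ((j:ℝ) - 1))) * c ((j:ℤ)-1) := by
    have step1 : (∑ r ∈ Finset.Icc 1 n, ∑ s ∈ Finset.Icc 1 n, c ((r:ℤ) - s))
        = ∑ r ∈ Finset.Icc 1 n, ∑ s ∈ Finset.Icc 1 n, ∑ j ∈ Finset.Icc 1 (M+1),
            (if ((r:ℤ)-s).natAbs + 1 = j then (1:ℝ) else 0) * c ((j:ℤ)-1) := by
      refine Finset.sum_congr rfl fun r _ => Finset.sum_congr rfl fun s _ => ?_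
      rw [pick_sum M (M+1) le_rfl c hcs hc0]
    rw [step1,
      Finset.sum_congr rfl fun r (_ : r ∈ Finset.Icc 1 n) => Finset.sum_comm,
      Finset.sum_comm]
    refine Finset.sum_congr rfl fun j hj => ?_
    obtain ⟨hj1, hj2⟩ := Finset.mem_Icc.mp hj
    have hcnt : (∑ r ∈ Finset.Icc 1 n, ∑ s ∈ Finset.Icc 1 n,
        (if ((r:ℤ)-s).natAbs + 1 = j then (1:ℝ) else 0) * c ((j:ℤ)-1))
        = ((2 - if j - 1 = 0 then (1:ℝ) else 0) * ((n:ℝ) - (j-1:ℕ))) * c ((j:ℤ)-1) := by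
      rw [← count_pairs n (j-1) (by omega)]
      rw [Finset.sum_mul]
      refine Finset.sum_congr rfl fun r _ => ?_
      rw [Finset.sum_mul]
      refine Finset.sum_congr rfl fun s _ => ?_
      congr 1
      exact if_congr (by omega) rfl rfl
    rw [hcnt]
    have e1 : (if j - 1 = 0 then (1:ℝ) else 0) = (if j = 1 then (1:ℝ) else 0) :=
      if_congr (by omega) rfl rfl
    have e2 : ((j - 1 : ℕ) : ℝ) = (j:ℝ) - 1 := by
      push_cast [Nat.cast_sub hj1]; ring
    rw [e1, e2]
  -- Term 2
  have hB : (n:ℝ)⁻¹ * ∑ _h ∈ Finset.Icc 1 (n - i + 1),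
        ((n:ℝ)⁻¹ * ((n:ℝ)⁻¹ * ∑ r ∈ Finset.Icc 1 n, ∑ s ∈ Finset.Icc 1 n, c ((r:ℤ) - s)))
      = ∑ j ∈ Finset.Icc 1 (M+1),
          ((1 - ((i : ℝ) - 1) / (n : ℝ)) * (1 - ((j : ℝ) - 1) / (n : ℝ)) *
            ((2 - if j = 1 then (1 : ℝ) else 0) / (n : ℝ))) * c ((j:ℤ)-1) := by
    rw [Finset.sum_const, nsmul_eq_mul, hcard, hS, Finset.mul_sum, Finset.mul_sum,
      Finset.mul_sum, Finset.mul_sum]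
    refine Finset.sum_congr rfl fun j _ => ?_
    have hcoef : ∀ t d e : ℝ,
        (n:ℝ)⁻¹ * (((n:ℝ) - (i:ℝ) + 1) * ((n:ℝ)⁻¹ * ((n:ℝ)⁻¹ * (t * ((n:ℝ) - d) * e))))
        = (1 - ((i:ℝ) - 1)/(n:ℝ)) * (1 - d/(n:ℝ)) * (t/(n:ℝ)) * e := by
      intro t d e; field_simp; ring
    exact hcoef _ _ _
  -- Term 3
  have conv3 : ∀ h : ℕ, (∑ r ∈ Finset.Icc 1 n, c ((r:ℤ) - ((h:ℤ) + i - 1)))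
      = ∑ r ∈ Finset.Icc 1 n, c ((h:ℤ) + i - 1 - r) := by
    intro h
    refine Finset.sum_congr rfl fun r _ => ?_
    have : (r:ℤ) - ((h:ℤ) + i - 1) = -((h:ℤ) + i - 1 - r) := by ring
    rw [this, hcs]
  have hC : (n:ℝ)⁻¹ * ∑ h ∈ Finset.Icc 1 (n - i + 1), ((n:ℝ)⁻¹ * ∑ r ∈ Finset.Icc 1 n, c ((h:ℤ) - r))
        + (n:ℝ)⁻¹ * ∑ h ∈ Finset.Icc 1 (n - i + 1), ((n:ℝ)⁻¹ * ∑ r ∈ Finset.Icc 1 n, c ((r:ℤ) - ((h:ℤ) + i - 1)))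
      = ∑ j ∈ Finset.Icc 1 (M+1),
          ((1 / (n : ℝ) ^ 2) * ∑ a ∈ Finset.Icc 1 (n - i + 1), ∑ b ∈ Finset.Icc 1 n,
            ((if ((a : ℤ) - (b : ℤ)).natAbs + 1 = j then (1 : ℝ) else 0)
              + (if ((a : ℤ) + (i : ℤ) - 1 - (b : ℤ)).natAbs + 1 = j then (1 : ℝ) else 0))) * c ((j:ℤ)-1) := by
    have hL : (n:ℝ)⁻¹ * ∑ h ∈ Finset.Icc 1 (n - i + 1), ((n:ℝ)⁻¹ * ∑ r ∈ Finset.Icc 1 n, c ((h:ℤ) - r))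
        + (n:ℝ)⁻¹ * ∑ h ∈ Finset.Icc 1 (n - i + 1), ((n:ℝ)⁻¹ * ∑ r ∈ Finset.Icc 1 n, c ((r:ℤ) - ((h:ℤ) + i - 1)))
        = (1 / (n : ℝ) ^ 2) * ((∑ h ∈ Finset.Icc 1 (n - i + 1), ∑ r ∈ Finset.Icc 1 n, c ((h:ℤ) - r))
          + ∑ h ∈ Finset.Icc 1 (n - i + 1), ∑ r ∈ Finset.Icc 1 n, c ((h:ℤ) + i - 1 - r)) := by
      simp only [conv3]
      rw [← Finset.mul_sum, ← Finset.mul_sum,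
        show (1:ℝ)/(n:ℝ)^2 = (n:ℝ)⁻¹ * (n:ℝ)⁻¹ from by rw [one_div, pow_two, mul_inv]]
      ring
    have rhs2 : ∀ j : ℕ,
        ((1 / (n : ℝ) ^ 2) * ∑ a ∈ Finset.Icc 1 (n - i + 1), ∑ b ∈ Finset.Icc 1 n,
            ((if ((a : ℤ) - (b : ℤ)).natAbs + 1 = j then (1 : ℝ) else 0)
              + (if ((a : ℤ) + (i : ℤ) - 1 - (b : ℤ)).natAbs + 1 = j then (1 : ℝ) else 0))) * c ((j:ℤ)-1)
        = (1 / (n : ℝ) ^ 2) * ∑ a ∈ Finset.Icc 1 (n - i + 1), ∑ b ∈ Finset.Icc 1 n,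
            ((if ((a : ℤ) - (b : ℤ)).natAbs + 1 = j then (1 : ℝ) else 0) * c ((j:ℤ)-1)
              + (if ((a : ℤ) + (i : ℤ) - 1 - (b : ℤ)).natAbs + 1 = j then (1 : ℝ) else 0) * c ((j:ℤ)-1)) := by
      intro j
      rw [mul_assoc, Finset.sum_mul]
      congr 1
      refine Finset.sum_congr rfl fun a _ => ?_
      rw [Finset.sum_mul]
      refine Finset.sum_congr rfl fun b _ => ?_
      ring
    have swap1 : (∑ j ∈ Finset.Icc 1 (M+1), ∑ a ∈ Finset.Icc 1 (n - i + 1), ∑ b ∈ Finset.Icc 1 n,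
            ((if ((a : ℤ) - (b : ℤ)).natAbs + 1 = j then (1 : ℝ) else 0) * c ((j:ℤ)-1)
              + (if ((a : ℤ) + (i : ℤ) - 1 - (b : ℤ)).natAbs + 1 = j then (1 : ℝ) else 0) * c ((j:ℤ)-1)))
        = ∑ a ∈ Finset.Icc 1 (n - i + 1), ∑ j ∈ Finset.Icc 1 (M+1), ∑ b ∈ Finset.Icc 1 n,
            ((if ((a : ℤ) - (b : ℤ)).natAbs + 1 = j then (1 : ℝ) else 0) * c ((j:ℤ)-1)
              + (if ((a : ℤ) + (i : ℤ) - 1 - (b : ℤ)).natAbs + 1 = j then (1 : ℝ) else 0) * c ((j:ℤ)-1)) :=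
      Finset.sum_comm
    have swap2 : ∀ a : ℕ,
        (∑ j ∈ Finset.Icc 1 (M+1), ∑ b ∈ Finset.Icc 1 n,
            ((if ((a : ℤ) - (b : ℤ)).natAbs + 1 = j then (1 : ℝ) else 0) * c ((j:ℤ)-1)
              + (if ((a : ℤ) + (i : ℤ) - 1 - (b : ℤ)).natAbs + 1 = j then (1 : ℝ) else 0) * c ((j:ℤ)-1)))
        = (∑ b ∈ Finset.Icc 1 n, c ((a:ℤ) - b)) + ∑ b ∈ Finset.Icc 1 n, c ((a:ℤ) + i - 1 - b) := by
      intro a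
      rw [Finset.sum_comm, ← Finset.sum_add_distrib]
      refine Finset.sum_congr rfl fun b _ => ?_
      rw [Finset.sum_add_distrib, pick_sum M (M+1) le_rfl c hcs hc0,
        pick_sum M (M+1) le_rfl c hcs hc0]
    rw [hL, Finset.sum_congr rfl fun j _ => rhs2 j, ← Finset.mul_sum, swap1,
      Finset.sum_congr rfl fun a _ => swap2 a, Finset.sum_add_distrib]
  conv_lhs => rw [Finset.sum_add_distrib, Finset.sum_sub_distrib, Finset.sum_sub_distrib]
  linear_combination hA + hB - hC

/-- Let `X_1,…,X_n` be `ℝ^p`-valued random vectors with means `μ_i`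
and `Cov(X_i, X_j) = C(i−j)` (with `C(−h) = C(h)ᵀ`), and suppose `C(h) = 0` for
`|h| > M`. Then for `i ∈ {1,…,M+1}`,
`E[V_i] = E[n⁻¹Σ_{h=1}^{n−i+1}(X_h − X̄)ᵀ(X_{h+i−1} − X̄)]
        = Σ_{j=1}^{M+1} F_{n,M}(i,j)·tr(C(j−1)) + V_B(i)` exactly, where
`V_B(i) = n⁻¹Σ_{h=1}^{n−i+1}(μ_h − μ̄)ᵀ(μ_{h+i−1} − μ̄)` and `F_{n,M}` is the
matrix with entries
`F_{n,M}(i,j) = (1 − (i−1)/n)I(i=j) + (1 − (i−1)/n)(1 − (j−1)/n)(2 − I(j=1))/n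
 − n⁻²Σ_{a=1}^{n−i+1}Σ_{b=1}^{n}{I(|a−b|+1=j) + I(|a+i−1−b|+1=j)}`. -/
theorem stmt_9 {Ω : Type*} [MeasurableSpace Ω] (P : Measure Ω) [IsProbabilityMeasure P]
    (n p M : ℕ) (hn : 2 ≤ n) (hM : M < n)
    (X : ℕ → Ω → Fin p → ℝ) (μm : ℕ → Fin p → ℝ)
    (C : ℤ → Matrix (Fin p) (Fin p) ℝ)
    (hsym : ∀ h : ℤ, C (-h) = (C h)ᵀ)
    (hzero : ∀ h : ℤ, (M : ℤ) < |h| → C h = 0)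
    (hmeas : ∀ i, Measurable (X i))
    (hmean : ∀ i ∈ Finset.Icc 1 n, ∀ k, ∫ ω, X i ω k ∂P = μm i k)
    (hcov : ∀ i ∈ Finset.Icc 1 n, ∀ j ∈ Finset.Icc 1 n, ∀ k l : Fin p,
        ∫ ω, (X i ω k - μm i k) * (X j ω l - μm j l) ∂P = C ((i : ℤ) - (j : ℤ)) k l)
    (hint : ∀ i j k l, Integrable (fun ω => X i ω k * X j ω l) P)
    (F : ℕ → ℕ → ℝ)
    (hF : ∀ i j, F i j =
        (1 - ((i : ℝ) - 1) / (n : ℝ)) * (if i = j then 1 else 0)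
        + (1 - ((i : ℝ) - 1) / (n : ℝ)) * (1 - ((j : ℝ) - 1) / (n : ℝ)) *
            ((2 - if j = 1 then (1 : ℝ) else 0) / (n : ℝ))
        - (1 / (n : ℝ) ^ 2) * ∑ a ∈ Finset.Icc 1 (n - i + 1), ∑ b ∈ Finset.Icc 1 n,
            ((if ((a : ℤ) - (b : ℤ)).natAbs + 1 = j then (1 : ℝ) else 0)
              + (if ((a : ℤ) + (i : ℤ) - 1 - (b : ℤ)).natAbs + 1 = j then (1 : ℝ) else 0))) :
    ∀ i ∈ Finset.Icc 1 (M + 1),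
      ∫ ω, (n : ℝ)⁻¹ * ∑ h ∈ Finset.Icc 1 (n - i + 1), ∑ k,
          (X h ω k - (n : ℝ)⁻¹ * ∑ a ∈ Finset.Icc 1 n, X a ω k) *
            (X (h + i - 1) ω k - (n : ℝ)⁻¹ * ∑ a ∈ Finset.Icc 1 n, X a ω k) ∂P
        = (∑ j ∈ Finset.Icc 1 (M + 1), F i j * Matrix.trace (C ((j : ℤ) - 1)))
          + (n : ℝ)⁻¹ * ∑ h ∈ Finset.Icc 1 (n - i + 1), ∑ k,
              (μm h k - (n : ℝ)⁻¹ * ∑ a ∈ Finset.Icc 1 n, μm a k) *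
                (μm (h + i - 1) k - (n : ℝ)⁻¹ * ∑ a ∈ Finset.Icc 1 n, μm a k) := by
  intro i hi
  obtain ⟨hi1, hi2⟩ := Finset.mem_Icc.mp hi
  have hin : i ≤ n := by omega
  have hn0 : (n:ℝ) ≠ 0 := Nat.cast_ne_zero.mpr (by omega)
  have hXm : ∀ a k, Measurable fun ω => X a ω k :=
    fun a k => (measurable_pi_apply k).comp (hmeas a)
  have hX1 : ∀ a k, Integrable (fun ω => X a ω k) P := by
    intro a k
    have hb : Integrable (fun ω => (X a ω k * X a ω k + 1) / 2) P :=
      ((hint a a k k).add (integrable_const 1)).div_const 2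
    refine hb.mono' ((hXm a k).aestronglyMeasurable) ?_
    filter_upwards with ω
    simp only [Real.norm_eq_abs]
    nlinarith [sq_nonneg (|X a ω k| - 1), abs_nonneg (X a ω k), sq_abs (X a ω k)]
  have hXY : ∀ a b k l, Integrable (fun ω => (X a ω k - μm a k) * (X b ω l - μm b l)) P := by
    intro a b k l
    have hpt : (fun ω => (X a ω k - μm a k) * (X b ω l - μm b l))
        = fun ω => X a ω k * X b ω l - μm b l * X a ω k - μm a k * X b ω l
            + μm a k * μm b l := by
      funext ω; ring
    rw [hpt]
    exact (((hint a b k l).sub ((hX1 a k).const_mul _)).sub ((hX1 b l).const_mul _)).add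
      (integrable_const _)
  have IY : ∀ r k, Integrable (fun ω => X r ω k - μm r k) P :=
    fun r k => (hX1 r k).sub (integrable_const _)
  have hY0 : ∀ a ∈ Finset.Icc 1 n, ∀ k, ∫ ω, (X a ω k - μm a k) ∂P = 0 := by
    intro a ha k
    rw [integral_sub (hX1 a k) (integrable_const _), hmean a ha k, integral_const]
    simp
  have L0 : ∀ a b k, Integrable (fun ω =>
      (X a ω k - (n:ℝ)⁻¹ * ∑ r ∈ Finset.Icc 1 n, X r ω k) *
      (X b ω k - (n:ℝ)⁻¹ * ∑ r ∈ Finset.Icc 1 n, X r ω k)) P := by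
    intro a b k
    have hpt : (fun ω => (X a ω k - (n:ℝ)⁻¹ * ∑ r ∈ Finset.Icc 1 n, X r ω k) *
        (X b ω k - (n:ℝ)⁻¹ * ∑ r ∈ Finset.Icc 1 n, X r ω k))
        = fun ω => X a ω k * X b ω k
          - (n:ℝ)⁻¹ * ∑ r ∈ Finset.Icc 1 n, X a ω k * X r ω k
          - (n:ℝ)⁻¹ * ∑ r ∈ Finset.Icc 1 n, X r ω k * X b ω k
          + (n:ℝ)⁻¹ * ((n:ℝ)⁻¹ * ∑ r ∈ Finset.Icc 1 n, ∑ s ∈ Finset.Icc 1 n,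
              X r ω k * X s ω k) := by
      funext ω
      rw [← Finset.mul_sum, ← Finset.sum_mul, ← Finset.sum_mul_sum]
      ring
    rw [hpt]
    exact (((hint a b k k).sub
        ((integrable_finset_sum _ fun r _ => hint a r k k).const_mul _)).sub
        ((integrable_finset_sum _ fun r _ => hint r b k k).const_mul _)).add
      (((integrable_finset_sum _ fun r _ =>
          integrable_finset_sum _ fun s _ => hint r s k k).const_mul _).const_mul _)
  have L1 : ∀ a ∈ Finset.Icc 1 n, ∀ b ∈ Finset.Icc 1 n, ∀ k : Fin p,
      (∫ ω, (X a ω k - (n:ℝ)⁻¹ * ∑ r ∈ Finset.Icc 1 n, X r ω k) *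
           (X b ω k - (n:ℝ)⁻¹ * ∑ r ∈ Finset.Icc 1 n, X r ω k) ∂P)
      = C ((a:ℤ) - b) k k
        - (n:ℝ)⁻¹ * ∑ r ∈ Finset.Icc 1 n, C ((a:ℤ) - r) k k
        - (n:ℝ)⁻¹ * ∑ r ∈ Finset.Icc 1 n, C ((r:ℤ) - b) k k
        + (n:ℝ)⁻¹ * ((n:ℝ)⁻¹ * ∑ r ∈ Finset.Icc 1 n, ∑ s ∈ Finset.Icc 1 n, C ((r:ℤ) - s) k k)
        + (μm a k - (n:ℝ)⁻¹ * ∑ r ∈ Finset.Icc 1 n, μm r k) *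
          (μm b k - (n:ℝ)⁻¹ * ∑ r ∈ Finset.Icc 1 n, μm r k) := by
    intro a ha b hb k
    set ma := μm a k - (n:ℝ)⁻¹ * ∑ r ∈ Finset.Icc 1 n, μm r k with hma
    set mb := μm b k - (n:ℝ)⁻¹ * ∑ r ∈ Finset.Icc 1 n, μm r k with hmb
    have hpt : (fun ω => (X a ω k - (n:ℝ)⁻¹ * ∑ r ∈ Finset.Icc 1 n, X r ω k) *
        (X b ω k - (n:ℝ)⁻¹ * ∑ r ∈ Finset.Icc 1 n, X r ω k))
        = fun ω =>
          ((X a ω k - μm a k) * (X b ω k - μm b k)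
          - (n:ℝ)⁻¹ * ∑ r ∈ Finset.Icc 1 n, (X a ω k - μm a k) * (X r ω k - μm r k)
          - (n:ℝ)⁻¹ * ∑ r ∈ Finset.Icc 1 n, (X r ω k - μm r k) * (X b ω k - μm b k)
          + (n:ℝ)⁻¹ * ((n:ℝ)⁻¹ * ∑ r ∈ Finset.Icc 1 n, ∑ s ∈ Finset.Icc 1 n,
              (X r ω k - μm r k) * (X s ω k - μm s k)))
          + ((mb * (X a ω k - μm a k) + ma * (X b ω k - μm b k)
             - (ma + mb) * ((n:ℝ)⁻¹ * ∑ r ∈ Finset.Icc 1 n, (X r ω k - μm r k)))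
            + ma * mb) := by
      funext ω
      rw [← Finset.mul_sum, ← Finset.sum_mul, ← Finset.sum_mul_sum]
      have hsplit : ∑ r ∈ Finset.Icc 1 n, (X r ω k - μm r k)
          = (∑ r ∈ Finset.Icc 1 n, X r ω k) - ∑ r ∈ Finset.Icc 1 n, μm r k :=
        Finset.sum_sub_distrib _ _
      rw [hsplit, hma, hmb]
      ring
    rw [hpt]
    have Iab := hXY a b k k
    have I2 : Integrable (fun ω => (n:ℝ)⁻¹ * ∑ r ∈ Finset.Icc 1 n,
        (X a ω k - μm a k) * (X r ω k - μm r k)) P :=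
      (integrable_finset_sum _ fun r _ => hXY a r k k).const_mul _
    have I3 : Integrable (fun ω => (n:ℝ)⁻¹ * ∑ r ∈ Finset.Icc 1 n,
        (X r ω k - μm r k) * (X b ω k - μm b k)) P :=
      (integrable_finset_sum _ fun r _ => hXY r b k k).const_mul _
    have I4 : Integrable (fun ω => (n:ℝ)⁻¹ * ((n:ℝ)⁻¹ * ∑ r ∈ Finset.Icc 1 n,
        ∑ s ∈ Finset.Icc 1 n, (X r ω k - μm r k) * (X s ω k - μm s k))) P :=
      ((integrable_finset_sum _ fun r _ =>
        integrable_finset_sum _ fun s _ => hXY r s k k).const_mul _).const_mul _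
    have I6 : Integrable (fun ω => (ma + mb) * ((n:ℝ)⁻¹ * ∑ r ∈ Finset.Icc 1 n,
        (X r ω k - μm r k))) P :=
      (((integrable_finset_sum _ fun r _ => IY r k).const_mul _).const_mul _)
    have I5 : Integrable (fun ω => mb * (X a ω k - μm a k) + ma * (X b ω k - μm b k)
        - (ma + mb) * ((n:ℝ)⁻¹ * ∑ r ∈ Finset.Icc 1 n, (X r ω k - μm r k))) P :=
      (((IY a k).const_mul mb).add ((IY b k).const_mul ma)).sub I6
    have IQ1 : Integrable (fun ω => (X a ω k - μm a k) * (X b ω k - μm b k)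
        - (n:ℝ)⁻¹ * ∑ r ∈ Finset.Icc 1 n, (X a ω k - μm a k) * (X r ω k - μm r k)) P :=
      Iab.sub I2
    have IQ2 : Integrable (fun ω => (X a ω k - μm a k) * (X b ω k - μm b k)
        - (n:ℝ)⁻¹ * ∑ r ∈ Finset.Icc 1 n, (X a ω k - μm a k) * (X r ω k - μm r k)
        - (n:ℝ)⁻¹ * ∑ r ∈ Finset.Icc 1 n, (X r ω k - μm r k) * (X b ω k - μm b k)) P :=
      IQ1.sub I3
    have IQ : Integrable (fun ω => (X a ω k - μm a k) * (X b ω k - μm b k)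
        - (n:ℝ)⁻¹ * ∑ r ∈ Finset.Icc 1 n, (X a ω k - μm a k) * (X r ω k - μm r k)
        - (n:ℝ)⁻¹ * ∑ r ∈ Finset.Icc 1 n, (X r ω k - μm r k) * (X b ω k - μm b k)
        + (n:ℝ)⁻¹ * ((n:ℝ)⁻¹ * ∑ r ∈ Finset.Icc 1 n, ∑ s ∈ Finset.Icc 1 n,
            (X r ω k - μm r k) * (X s ω k - μm s k))) P := IQ2.add I4
    have ILab : Integrable (fun ω => mb * (X a ω k - μm a k) + ma * (X b ω k - μm b k)) P :=
      ((IY a k).const_mul mb).add ((IY b k).const_mul ma)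
    have ILc : Integrable (fun ω => mb * (X a ω k - μm a k) + ma * (X b ω k - μm b k)
        - (ma + mb) * ((n:ℝ)⁻¹ * ∑ r ∈ Finset.Icc 1 n, (X r ω k - μm r k))
        + ma * mb) P := I5.add (integrable_const (ma * mb))
    rw [integral_add IQ ILc,
      integral_add IQ2 I4,
      integral_sub IQ1 I3, integral_sub Iab I2,
      integral_add I5 (integrable_const (ma * mb)),
      integral_sub ILab I6,
      integral_add ((IY a k).const_mul mb) ((IY b k).const_mul ma)]
    have E1 : (∫ ω, (X a ω k - μm a k) * (X b ω k - μm b k) ∂P) = C ((a:ℤ) - b) k k :=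
      hcov a ha b hb k k
    have E2 : (∫ ω, (n:ℝ)⁻¹ * ∑ r ∈ Finset.Icc 1 n,
        (X a ω k - μm a k) * (X r ω k - μm r k) ∂P)
        = (n:ℝ)⁻¹ * ∑ r ∈ Finset.Icc 1 n, C ((a:ℤ) - r) k k := by
      rw [integral_const_mul, integral_finset_sum _ fun r _ => hXY a r k k]
      congr 1
      exact Finset.sum_congr rfl fun r hr => hcov a ha r hr k k
    have E3 : (∫ ω, (n:ℝ)⁻¹ * ∑ r ∈ Finset.Icc 1 n,
        (X r ω k - μm r k) * (X b ω k - μm b k) ∂P)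
        = (n:ℝ)⁻¹ * ∑ r ∈ Finset.Icc 1 n, C ((r:ℤ) - b) k k := by
      rw [integral_const_mul, integral_finset_sum _ fun r _ => hXY r b k k]
      congr 1
      exact Finset.sum_congr rfl fun r hr => hcov r hr b hb k k
    have E4 : (∫ ω, (n:ℝ)⁻¹ * ((n:ℝ)⁻¹ * ∑ r ∈ Finset.Icc 1 n, ∑ s ∈ Finset.Icc 1 n,
        (X r ω k - μm r k) * (X s ω k - μm s k)) ∂P)
        = (n:ℝ)⁻¹ * ((n:ℝ)⁻¹ * ∑ r ∈ Finset.Icc 1 n, ∑ s ∈ Finset.Icc 1 n,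
            C ((r:ℤ) - s) k k) := by
      rw [integral_const_mul, integral_const_mul,
        integral_finset_sum _ fun r _ => integrable_finset_sum _ fun s _ => hXY r s k k]
      congr 2
      refine Finset.sum_congr rfl fun r hr => ?_
      rw [integral_finset_sum _ fun s _ => hXY r s k k]
      exact Finset.sum_congr rfl fun s hs => hcov r hr s hs k k
    have E5a : (∫ ω, mb * (X a ω k - μm a k) ∂P) = 0 := by
      rw [integral_const_mul, hY0 a ha k, mul_zero]
    have E5b : (∫ ω, ma * (X b ω k - μm b k) ∂P) = 0 := by
      rw [integral_const_mul, hY0 b hb k, mul_zero]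
    have E5c : (∫ ω, (ma + mb) * ((n:ℝ)⁻¹ * ∑ r ∈ Finset.Icc 1 n,
        (X r ω k - μm r k)) ∂P) = 0 := by
      rw [integral_const_mul, integral_const_mul,
        integral_finset_sum _ fun r _ => IY r k,
        Finset.sum_congr rfl fun r hr => hY0 r hr k]
      simp
    have E6 : (∫ (_ : Ω), ma * mb ∂P) = ma * mb := by simp
    rw [E1, E2, E3, E4, E5a, E5b, E5c, E6]
    ring
  -- main assembly
  have hper : ∀ h ∈ Finset.Icc 1 (n - i + 1),
      (∫ ω, ∑ k, (X h ω k - (n:ℝ)⁻¹ * ∑ a ∈ Finset.Icc 1 n, X a ω k) *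
          (X (h + i - 1) ω k - (n:ℝ)⁻¹ * ∑ a ∈ Finset.Icc 1 n, X a ω k) ∂P)
      = ((C (1 - (i:ℤ))).trace
          - (n:ℝ)⁻¹ * ∑ r ∈ Finset.Icc 1 n, (C ((h:ℤ) - r)).trace
          - (n:ℝ)⁻¹ * ∑ r ∈ Finset.Icc 1 n, (C ((r:ℤ) - ((h:ℤ) + i - 1))).trace
          + (n:ℝ)⁻¹ * ((n:ℝ)⁻¹ * ∑ r ∈ Finset.Icc 1 n, ∑ s ∈ Finset.Icc 1 n,
              (C ((r:ℤ) - s)).trace))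
        + ∑ k, (μm h k - (n:ℝ)⁻¹ * ∑ a ∈ Finset.Icc 1 n, μm a k) *
            (μm (h + i - 1) k - (n:ℝ)⁻¹ * ∑ a ∈ Finset.Icc 1 n, μm a k) := by
    intro h hh
    obtain ⟨hh1, hh2⟩ := Finset.mem_Icc.mp hh
    have ha' : h ∈ Finset.Icc 1 n := Finset.mem_Icc.mpr ⟨hh1, by omega⟩
    have hb' : h + i - 1 ∈ Finset.Icc 1 n := Finset.mem_Icc.mpr ⟨by omega, by omega⟩
    have hcast : ((h + i - 1 : ℕ) : ℤ) = (h:ℤ) + i - 1 := by omega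
    rw [integral_finset_sum _ fun k _ => L0 h (h + i - 1) k,
      Finset.sum_congr rfl fun k _ => L1 h ha' (h + i - 1) hb' k, hcast]
    simp only [Finset.sum_add_distrib, Finset.sum_sub_distrib]
    congr 1
    rw [show ((h:ℤ) - ((h:ℤ) + (i:ℤ) - 1)) = 1 - (i:ℤ) from by ring]
    have e1 : (∑ k : Fin p, C (1 - (i:ℤ)) k k) = (C (1 - (i:ℤ))).trace := rfl
    have e2 : (∑ k : Fin p, (n:ℝ)⁻¹ * ∑ r ∈ Finset.Icc 1 n, C ((h:ℤ) - r) k k)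
        = (n:ℝ)⁻¹ * ∑ r ∈ Finset.Icc 1 n, (C ((h:ℤ) - r)).trace := by
      rw [← Finset.mul_sum, Finset.sum_comm]
      rfl
    have e3 : (∑ k : Fin p, (n:ℝ)⁻¹ * ∑ r ∈ Finset.Icc 1 n,
        C ((r:ℤ) - ((h:ℤ) + i - 1)) k k)
        = (n:ℝ)⁻¹ * ∑ r ∈ Finset.Icc 1 n, (C ((r:ℤ) - ((h:ℤ) + i - 1))).trace := by
      rw [← Finset.mul_sum, Finset.sum_comm]
      rfl
    have e4 : (∑ k : Fin p, (n:ℝ)⁻¹ * ((n:ℝ)⁻¹ * ∑ r ∈ Finset.Icc 1 n,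
        ∑ s ∈ Finset.Icc 1 n, C ((r:ℤ) - s) k k))
        = (n:ℝ)⁻¹ * ((n:ℝ)⁻¹ * ∑ r ∈ Finset.Icc 1 n, ∑ s ∈ Finset.Icc 1 n,
            (C ((r:ℤ) - s)).trace) := by
      rw [← Finset.mul_sum, ← Finset.mul_sum, Finset.sum_comm]
      congr 1
      congr 1
      refine Finset.sum_congr rfl fun r _ => ?_
      rw [Finset.sum_comm]
      rfl
    rw [e1, e2, e3, e4]
  rw [integral_const_mul,
    integral_finset_sum _ fun h _ => integrable_finset_sum _ fun k _ => L0 h (h + i - 1) k,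
    Finset.sum_congr rfl hper, Finset.sum_add_distrib, mul_add]
  congr 1
  exact comb n M i hn hM hi1 hi2 (fun z => (C z).trace)
    (fun z => by show (C (-z)).trace = (C z).trace; rw [hsym, Matrix.trace_transpose])
    (fun z hz => by show (C z).trace = 0; rw [hzero z hz]; simp)
    F hF
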